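/- Suppose N_E, D_E ∈ ℂ[z] are coprime polynomials with D_E(0) ≠ 0. Then the polynomials N_f = z·B_n^{♯n}·N_E + A_n·D_E and D_f = z·A_n^{♯n}·N_E + B_n·D_E have no common zero in ℂ; equivalently, N_f and D_f are coprime in ℂ[z]. In particular N_f/D_f is a coprime representation of the image of E = N_E/D_E under the Schur-algorithm linear fractional transformation. -/

import Mathlib

open Polynomial

/-- The pair `(A_j, B_j)` of polynomials from the recursion (1.8a):
`A_0 = γ_n`, `B_0 = 1`, `A_{j+1}(z) = z·A_j(z) + γ_{n-j-1}·B_j(z)`,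
`B_{j+1}(z) = z·conj(γ_{n-j-1})·A_j(z) + B_j(z)`. -/
noncomputable def schurAB (γ : ℕ → ℂ) (n : ℕ) : ℕ → Polynomial ℂ × Polynomial ℂ
  | 0 => (C (γ n), 1)
  | j + 1 =>
      (X * (schurAB γ n j).1 + C (γ (n - j - 1)) * (schurAB γ n j).2,
       X * C (starRingEnd ℂ (γ (n - j - 1))) * (schurAB γ n j).1 + (schurAB γ n j).2)

/-- The reflection `P^{♯k}`: the coefficient of `z^j` is `conj` of the coefficient of
`z^{k-j}` of `P`, i.e. `P^{♯k}(z) = z^k · conj(P(1/conj z))` for `P` of degree ≤ k. -/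
noncomputable def sharp (k : ℕ) (P : Polynomial ℂ) : Polynomial ℂ :=
  ∑ j ∈ Finset.range (k + 1), C (starRingEnd ℂ (P.coeff (k - j))) * X ^ j

noncomputable def schurD (γ : ℕ → ℂ) (n : ℕ) : ℕ → ℂ
  | 0 => 1 - γ n * starRingEnd ℂ (γ n)
  | j + 1 => (1 - γ (n - j - 1) * starRingEnd ℂ (γ (n - j - 1))) * schurD γ n j

lemma sharp_add (k : ℕ) (P Q : Polynomial ℂ) :
    sharp k (P + Q) = sharp k P + sharp k Q := by
  simp [sharp, coeff_add, map_add, add_mul, Finset.sum_add_distrib]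

lemma sharp_C_mul (k : ℕ) (c : ℂ) (P : Polynomial ℂ) :
    sharp k (C c * P) = C (starRingEnd ℂ c) * sharp k P := by
  simp [sharp, coeff_C_mul, map_mul, Finset.mul_sum, mul_assoc]

lemma sharp_succ (k : ℕ) (P : Polynomial ℂ) :
    sharp (k + 1) P = C (starRingEnd ℂ (P.coeff (k + 1))) + X * sharp k P := by
  rw [sharp, sharp, Finset.sum_range_succ']
  simp only [Nat.succ_sub_succ, Nat.sub_zero, pow_zero, mul_one]
  rw [add_comm, Finset.mul_sum]
  congr 1
  refine Finset.sum_congr rfl fun j _ => ?_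
  ring

lemma sharp_X_mul (k : ℕ) (P : Polynomial ℂ) :
    sharp (k + 1) (X * P) = sharp k P := by
  rw [sharp, sharp, Finset.sum_range_succ]
  have h0 : (X * P).coeff 0 = 0 := by simp [coeff_mul_X_pow']
  rw [Nat.sub_self, h0]
  simp only [map_zero, C_0, zero_mul, add_zero]
  refine Finset.sum_congr rfl fun j hj => ?_
  have hj' : j ≤ k := Nat.lt_succ_iff.mp (Finset.mem_range.mp hj)
  rw [Nat.succ_sub hj', coeff_X_mul]

lemma sharp_zero (P : Polynomial ℂ) : sharp 0 P = C (starRingEnd ℂ (P.coeff 0)) := by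
  simp [sharp]

lemma schurAB_natDegree (γ : ℕ → ℂ) (n : ℕ) : ∀ j,
    (schurAB γ n j).1.natDegree ≤ j ∧ (schurAB γ n j).2.natDegree ≤ j := by
  intro j
  induction j with
  | zero => simp [schurAB]
  | succ j ih =>
    constructor
    · refine (natDegree_add_le _ _).trans (max_le ?_ ?_)
      · have h1 := natDegree_mul_le (p := (X : Polynomial ℂ)) (q := (schurAB γ n j).1)
        have h2 := Nat.add_le_add (natDegree_X_le (R := ℂ)) ih.1
        omega
      · have h1 := natDegree_mul_le (p := (C (γ (n - j - 1)) : Polynomial ℂ))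
          (q := (schurAB γ n j).2)
        have h2 := ih.2
        have h3 : (C (γ (n - j - 1)) : Polynomial ℂ).natDegree = 0 := natDegree_C _
        omega
    · refine (natDegree_add_le _ _).trans (max_le ?_ ?_)
      · have h0 : (X * C (starRingEnd ℂ (γ (n - j - 1))) : Polynomial ℂ).natDegree ≤ 1 := by
          have := natDegree_mul_le (p := (X : Polynomial ℂ))
            (q := (C (starRingEnd ℂ (γ (n - j - 1))) : Polynomial ℂ))
          have h3 : (C (starRingEnd ℂ (γ (n - j - 1))) : Polynomial ℂ).natDegree = 0 :=
            natDegree_C _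
          have h4 : (X : Polynomial ℂ).natDegree ≤ 1 := natDegree_X_le
          omega
        have h1 := natDegree_mul_le
          (p := (X * C (starRingEnd ℂ (γ (n - j - 1))) : Polynomial ℂ)) (q := (schurAB γ n j).1)
        have h2 := ih.1
        omega
      · exact ih.2.trans (Nat.le_succ j)

lemma schurA_coeff_top (γ : ℕ → ℂ) (n j : ℕ) : (schurAB γ n j).1.coeff (j + 1) = 0 :=
  coeff_eq_zero_of_natDegree_lt (lt_of_le_of_lt (schurAB_natDegree γ n j).1 (Nat.lt_succ_self j))

lemma schurB_coeff_top (γ : ℕ → ℂ) (n j : ℕ) : (schurAB γ n j).2.coeff (j + 1) = 0 :=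
  coeff_eq_zero_of_natDegree_lt (lt_of_le_of_lt (schurAB_natDegree γ n j).2 (Nat.lt_succ_self j))

lemma sharp_schurA_succ (γ : ℕ → ℂ) (n j : ℕ) :
    sharp (j + 1) (schurAB γ n (j + 1)).1 =
      sharp j (schurAB γ n j).1 +
        C (starRingEnd ℂ (γ (n - j - 1))) * X * sharp j (schurAB γ n j).2 := by
  show sharp (j + 1) (X * (schurAB γ n j).1 + C (γ (n - j - 1)) * (schurAB γ n j).2) = _
  rw [sharp_add, sharp_X_mul, sharp_C_mul, sharp_succ, schurB_coeff_top]
  simp [mul_add, mul_assoc]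

lemma sharp_schurB_succ (γ : ℕ → ℂ) (n j : ℕ) :
    sharp (j + 1) (schurAB γ n (j + 1)).2 =
      C (γ (n - j - 1)) * sharp j (schurAB γ n j).1 + X * sharp j (schurAB γ n j).2 := by
  show sharp (j + 1) (X * C (starRingEnd ℂ (γ (n - j - 1))) * (schurAB γ n j).1
      + (schurAB γ n j).2) = _
  rw [mul_assoc, sharp_add, sharp_X_mul, sharp_C_mul, sharp_succ, schurB_coeff_top]
  simp

lemma schur_det (γ : ℕ → ℂ) (n : ℕ) : ∀ j,
    (schurAB γ n j).2 * sharp j (schurAB γ n j).2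
      - (schurAB γ n j).1 * sharp j (schurAB γ n j).1 = C (schurD γ n j) * X ^ j := by
  intro j
  induction j with
  | zero =>
    show (1 : Polynomial ℂ) * sharp 0 1 - C (γ n) * sharp 0 (C (γ n)) = _
    rw [sharp_zero, sharp_zero, schurD]
    simp only [coeff_one_zero, coeff_C_zero, map_one, map_sub, map_mul, C_1]
    ring
  | succ j ih =>
    rw [sharp_schurA_succ, sharp_schurB_succ, schurD, map_mul, map_sub, map_one, map_mul]
    show (X * C (starRingEnd ℂ (γ (n - j - 1))) * (schurAB γ n j).1 + (schurAB γ n j).2) * _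
      - (X * (schurAB γ n j).1 + C (γ (n - j - 1)) * (schurAB γ n j).2) * _ = _
    rw [pow_succ]
    linear_combination ((1 - C (γ (n - j - 1)) * C (starRingEnd ℂ (γ (n - j - 1)))) * X) * ih

lemma schurB_eval_zero (γ : ℕ → ℂ) (n : ℕ) : ∀ j, ((schurAB γ n j).2).eval 0 = 1 := by
  intro j
  induction j with
  | zero => simp [schurAB]
  | succ j ih =>
    simp [schurAB, ih]

lemma schurD_ne_zero (γ : ℕ → ℂ) (n : ℕ) (hγ : ∀ j ≤ n, ‖γ j‖ < 1) :
    ∀ j, schurD γ n j ≠ 0 := by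
  have key : ∀ k ≤ n, 1 - γ k * starRingEnd ℂ (γ k) ≠ 0 := by
    intro k hk h
    have h2 : γ k * starRingEnd ℂ (γ k) = 1 := by linear_combination -h
    rw [Complex.mul_conj] at h2
    have h3 : Complex.normSq (γ k) = 1 := by exact_mod_cast h2
    have h4 : ‖γ k‖ < 1 := hγ k hk
    rw [← Complex.sq_norm] at h3
    nlinarith [norm_nonneg (γ k)]
  intro j
  induction j with
  | zero => exact key n le_rfl
  | succ j ih =>
    exact mul_ne_zero (key (n - j - 1) (le_trans (Nat.sub_le _ _) (Nat.sub_le _ _))) ih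

/-- if `N_E, D_E` are coprime with `D_E(0) ≠ 0`, then
`N_f = z·B_n^{♯n}·N_E + A_n·D_E` and `D_f = z·A_n^{♯n}·N_E + B_n·D_E` have no common
zero in `ℂ`; equivalently they are coprime in `ℂ[z]`, so `N_f/D_f` is a coprime
representation of the image of `E = N_E/D_E` under the linear fractional transformation. -/
theorem stmt_7 (n : ℕ) (hn : 1 ≤ n) (γ : ℕ → ℂ)
    (hγ : ∀ j ≤ n, ‖γ j‖ < 1)
    (NE DE : Polynomial ℂ) (hcop : IsCoprime NE DE) (hDE0 : DE.eval 0 ≠ 0) :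
    (∀ z : ℂ, ¬((X * sharp n (schurAB γ n n).2 * NE + (schurAB γ n n).1 * DE).eval z = 0 ∧
        (X * sharp n (schurAB γ n n).1 * NE + (schurAB γ n n).2 * DE).eval z = 0)) ∧
    IsCoprime (X * sharp n (schurAB γ n n).2 * NE + (schurAB γ n n).1 * DE)
      (X * sharp n (schurAB γ n n).1 * NE + (schurAB γ n n).2 * DE) := by
  set A := (schurAB γ n n).1 with hA
  set B := (schurAB γ n n).2 with hB
  set As := sharp n A with hAs
  set Bs := sharp n B with hBs
  set N := X * Bs * NE + A * DE with hN
  set D := X * As * NE + B * DE with hD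
  set d := schurD γ n n with hd
  have hdet : B * Bs - A * As = C d * X ^ n := schur_det γ n n
  have hd0 : d ≠ 0 := schurD_ne_zero γ n hγ n
  obtain ⟨u, v, huv⟩ := hcop
  have h1 : B * N - A * D = C d * X ^ (n + 1) * NE := by
    rw [hN, hD]
    linear_combination (X * NE) * hdet
  have h2 : X * Bs * D - X * As * N = C d * X ^ (n + 1) * DE := by
    rw [hN, hD]
    linear_combination (X * DE) * hdet
  have hCinv : C d⁻¹ * C d = (1 : Polynomial ℂ) := by
    rw [← C_mul, inv_mul_cancel₀ hd0, C_1]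
  have hkey : (C d⁻¹ * (u * B - v * X * As)) * N + (C d⁻¹ * (v * X * Bs - u * A)) * D
      = X ^ (n + 1) := by
    linear_combination (C d⁻¹ * u) * h1 + (C d⁻¹ * v) * h2
      + (C d⁻¹ * C d * X ^ (n + 1)) * huv + (X ^ (n + 1)) * hCinv
  have hD0 : D.eval 0 ≠ 0 := by
    have : D.eval 0 = DE.eval 0 := by
      rw [hD]
      simp [hB, schurB_eval_zero γ n n]
    rw [this]; exact hDE0
  have hXD : IsCoprime (X : Polynomial ℂ) D := by
    refine ⟨-(C (D.eval 0)⁻¹) * D.divX, C (D.eval 0)⁻¹, ?_⟩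
    have h := X_mul_divX_add D
    have hc : C (D.eval 0)⁻¹ * C (D.coeff 0) = (1 : Polynomial ℂ) := by
      rw [coeff_zero_eq_eval_zero, ← C_mul, inv_mul_cancel₀ hD0, C_1]
    linear_combination (-(C (D.eval 0)⁻¹)) * h + hc
  have hXnD : IsCoprime ((X : Polynomial ℂ) ^ (n + 1)) D := hXD.pow_left
  obtain ⟨s, t, hst⟩ := hXnD
  have hfin : IsCoprime N D := by
    refine ⟨s * (C d⁻¹ * (u * B - v * X * As)), s * (C d⁻¹ * (v * X * Bs - u * A)) + t, ?_⟩
    linear_combination hst + s * hkey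
  refine ⟨?_, hfin⟩
  rintro z ⟨hz1, hz2⟩
  obtain ⟨a, b, hab⟩ := hfin
  have h := congrArg (Polynomial.eval z) hab
  simp only [eval_add, eval_mul, eval_one] at h
  rw [show N.eval z = 0 from hz1, show D.eval z = 0 from hz2] at h
  simp at h
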